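/- Let n ≥ 4 and let p : Fin n → ℝ² be the circle placement p(i) = (cos(2πi/n), sin(2πi/n)). If a < b < c < d are four indices in Fin n, then the closed segment between p(a) and p(b) is disjoint from the closed segment between p(c) and p(d), and the closed segment between p(b) and p(c) is disjoint from the closed segment between p(a) and p(d). (Non-interleaved chords of the circle drawing do not cross: in the proof of Lemma 1, each 4-set of vertices contributes only the one crossing between the interleaved pair of edges.) -/

import Mathlib

/-- The circle placement: vertex `i` of `Fin n` is placed at the point
`(cos (2πi/n), sin (2πi/n))` of the unit circle in `ℝ²`. -/
noncomputable def circlePlacement (n : ℕ) : Fin n → ℝ × ℝ :=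
  fun i => (Real.cos (2 * Real.pi * (i : ℕ) / n), Real.sin (2 * Real.pi * (i : ℕ) / n))

private lemma det_identity (α β γ : ℝ) :
    (Real.cos β - Real.cos α) * (Real.sin γ - Real.sin α)
      - (Real.sin β - Real.sin α) * (Real.cos γ - Real.cos α)
      = 4 * Real.sin ((β - α)/2) * Real.sin ((γ - α)/2) * Real.sin ((γ - β)/2) := by
  rw [Real.cos_sub_cos, Real.sin_sub_sin, Real.sin_sub_sin, Real.cos_sub_cos]
  have h : (γ - β)/2 = (γ + α)/2 - (β + α)/2 := by ring
  rw [h, Real.sin_sub]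
  ring

private lemma seg_disjoint (p q u v : ℝ × ℝ)
    (hu : 0 < (q.1-p.1)*(u.2-p.2) - (q.2-p.2)*(u.1-p.1))
    (hv : 0 < (q.1-p.1)*(v.2-p.2) - (q.2-p.2)*(v.1-p.1)) :
    Disjoint (segment ℝ p q) (segment ℝ u v) := by
  rw [Set.disjoint_left]
  rintro x ⟨s, t, hs, ht, hst, hx⟩ ⟨s', t', hs', ht', hst', hx'⟩
  have hx1 : s * p.1 + t * q.1 = x.1 := by
    rw [← hx]; simp [Prod.fst_add, Prod.smul_fst, smul_eq_mul]
  have hx2 : s * p.2 + t * q.2 = x.2 := by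
    rw [← hx]; simp [Prod.snd_add, Prod.smul_snd, smul_eq_mul]
  have hx1' : s' * u.1 + t' * v.1 = x.1 := by
    rw [← hx']; simp [Prod.fst_add, Prod.smul_fst, smul_eq_mul]
  have hx2' : s' * u.2 + t' * v.2 = x.2 := by
    rw [← hx']; simp [Prod.snd_add, Prod.smul_snd, smul_eq_mul]
  have h1 : (q.1-p.1)*(x.2-p.2) - (q.2-p.2)*(x.1-p.1) = 0 := by
    have hs1 : s = 1 - t := by linarith
    subst hs1
    rw [← hx1, ← hx2]; ring
  have h2 : 0 < (q.1-p.1)*(x.2-p.2) - (q.2-p.2)*(x.1-p.1) := by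
    rw [← hx1', ← hx2']
    have he : (q.1-p.1)*(s'*u.2+t'*v.2-p.2) - (q.2-p.2)*(s'*u.1+t'*v.1-p.1)
        = s'*((q.1-p.1)*(u.2-p.2)-(q.2-p.2)*(u.1-p.1))
          + t'*((q.1-p.1)*(v.2-p.2)-(q.2-p.2)*(v.1-p.1)) := by
      linear_combination ((q.1-p.1)*p.2 - (q.2-p.2)*p.1) * hst'
    rw [he]
    rcases eq_or_lt_of_le ht' with h | h
    · have hs1 : s' = 1 := by linarith
      rw [hs1, ← h]; simpa using hu
    · have h1 := mul_pos h hv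
      have h2 := mul_nonneg hs' hu.le
      linarith
  linarith

private lemma sin_half_pos (n : ℕ) (hn : 0 < n) (i j : Fin n) (hij : i < j) :
    0 < Real.sin ((2*Real.pi*(j:ℕ)/n - 2*Real.pi*(i:ℕ)/n)/2) := by
  have hj : ((j:ℕ):ℝ) < n := by exact_mod_cast j.isLt
  have hij' : ((i:ℕ):ℝ) < ((j:ℕ):ℝ) := by exact_mod_cast hij
  have hn' : (0:ℝ) < n := by exact_mod_cast hn
  have hi0 : (0:ℝ) ≤ ((i:ℕ):ℝ) := Nat.cast_nonneg _
  have heq : (2*Real.pi*(j:ℕ)/n - 2*Real.pi*(i:ℕ)/n)/2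
      = Real.pi*(((j:ℕ):ℝ)-((i:ℕ):ℝ))/n := by field_simp
  rw [heq]
  apply Real.sin_pos_of_pos_of_lt_pi
  · apply div_pos (mul_pos Real.pi_pos (by linarith)) hn'
  · rw [div_lt_iff₀ hn']
    nlinarith [Real.pi_pos]

/-- Non-interleaved chords of the circle drawing do not cross: for `a < b < c < d`
in `Fin n`, the closed segment `p a p b` is disjoint from the closed segment `p c p d`,
and the closed segment `p b p c` is disjoint from the closed segment `p a p d`. -/
theorem non_interleaved_chords_disjoint (n : ℕ) (hn : 4 ≤ n)
    (a b c d : Fin n) (hab : a < b) (hbc : b < c) (hcd : c < d) :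
    Disjoint (segment ℝ (circlePlacement n a) (circlePlacement n b))
        (segment ℝ (circlePlacement n c) (circlePlacement n d)) ∧
      Disjoint (segment ℝ (circlePlacement n b) (circlePlacement n c))
        (segment ℝ (circlePlacement n a) (circlePlacement n d)) := by
  have hn0 : 0 < n := by omega
  have hba := sin_half_pos n hn0 a b hab
  have hca := sin_half_pos n hn0 a c (hab.trans hbc)
  have hda := sin_half_pos n hn0 a d ((hab.trans hbc).trans hcd)
  have hcb := sin_half_pos n hn0 b c hbc
  have hdb := sin_half_pos n hn0 b d (hbc.trans hcd)
  have hdc := sin_half_pos n hn0 c d hcd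
  set A := 2*Real.pi*(a:ℕ)/n
  set B := 2*Real.pi*(b:ℕ)/n
  set C := 2*Real.pi*(c:ℕ)/n
  set D := 2*Real.pi*(d:ℕ)/n
  constructor
  · apply seg_disjoint
    · simp only [circlePlacement]
      rw [det_identity]
      nlinarith [mul_pos (mul_pos hba hca) hcb]
    · simp only [circlePlacement]
      rw [det_identity]
      nlinarith [mul_pos (mul_pos hba hda) hdb]
  · apply seg_disjoint
    · simp only [circlePlacement]
      rw [det_identity]
      rw [show (A - B)/2 = -((B - A)/2) by ring, show (A - C)/2 = -((C - A)/2) by ring]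
      simp only [Real.sin_neg]
      nlinarith [mul_pos (mul_pos hcb hba) hca]
    · simp only [circlePlacement]
      rw [det_identity]
      nlinarith [mul_pos (mul_pos hcb hdb) hdc]
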